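/- Let K, M, T be positive integers with M ≤ K. For each round t ∈ {1,…,T} and each index k ∈ {1,…,K}, let UCB(t,k) and LCB(t,k) be real numbers, and let L*(k) be real numbers satisfying LCB(t,k) ≤ L*(k) ≤ UCB(t,k) for all t and k. Suppose for each t a subset S_t ⊆ {1,…,K} with |S_t| = M is chosen that minimizes Σ_{k∈S} LCB(t,k) over all subsets S of size M. Let L̄⋆ = min over subsets S ⊆ {1,…,K} with |S| = M of (1/M) Σ_{k∈S} L*(k). Then Σ_{t=1}^T [ (1/M) Σ_{k∈S_t} L*(k) − L̄⋆ ] ≤ (1/M) Σ_{t=1}^T Σ_{k∈S_t} [UCB(t,k) − LCB(t,k)]. -/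
import Mathlib


open Finset

/-- Deterministic core of the top-M (multiple-play) regret bound for M-LCB. -/
theorem mlcb_topM_regret_core
    (K M T : ℕ) (hK : 0 < K) (hM : 0 < M) (hT : 0 < T) (hMK : M ≤ K)
    (UCB LCB : Fin T → Fin K → ℝ) (Lstar : Fin K → ℝ)
    (hbracket : ∀ t k, LCB t k ≤ Lstar k ∧ Lstar k ≤ UCB t k)
    (S : Fin T → Finset (Fin K))
    (hScard : ∀ t, (S t).card = M)
    (hSmin : ∀ t, ∀ S' : Finset (Fin K), S'.card = M →
      ∑ k ∈ S t, LCB t k ≤ ∑ k ∈ S', LCB t k)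
    (Lbar : ℝ)
    (hLbar : IsLeast {x : ℝ | ∃ S' : Finset (Fin K), S'.card = M ∧
      x = (1 / (M : ℝ)) * ∑ k ∈ S', Lstar k} Lbar) :
    ∑ t, ((1 / (M : ℝ)) * ∑ k ∈ S t, Lstar k - Lbar)
      ≤ (1 / (M : ℝ)) * ∑ t, ∑ k ∈ S t, (UCB t k - LCB t k) := by
  obtain ⟨⟨Sstar, hScardstar, hLbarEq⟩, _⟩ := hLbar
  have hMpos : (0 : ℝ) < (M : ℝ) := by exact_mod_cast hM
  rw [Finset.mul_sum]
  apply Finset.sum_le_sum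
  intro t _
  have h1 : ∑ k ∈ S t, LCB t k ≤ ∑ k ∈ Sstar, LCB t k := hSmin t Sstar hScardstar
  have h2 : ∑ k ∈ Sstar, LCB t k ≤ ∑ k ∈ Sstar, Lstar k :=
    Finset.sum_le_sum fun k _ => (hbracket t k).1
  have h3 : ∑ k ∈ S t, Lstar k - ∑ k ∈ Sstar, Lstar k
      ≤ ∑ k ∈ S t, (UCB t k - LCB t k) := by
    have h4 : ∑ k ∈ S t, Lstar k - ∑ k ∈ S t, LCB t k
        ≤ ∑ k ∈ S t, (UCB t k - LCB t k) := by
      rw [← Finset.sum_sub_distrib]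
      exact Finset.sum_le_sum fun k _ => by
        have := (hbracket t k).2; linarith [(hbracket t k).1]
    linarith
  rw [hLbarEq]
  rw [← mul_sub]
  apply mul_le_mul_of_nonneg_left h3 (by positivity)
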